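/- Under the hypotheses of the KL convergence theorem (sufficient decrease, relative error bound, KL inequality at X̄, and the initialization condition on X⁰), for each k ≥ 1 the following recursive inequality holds: ‖Xᵏ − Xᵏ⁻¹‖ + (2M/l)(φ(Fᵏ − F̄) − φ(Fᵏ⁺¹ − F̄)) ≥ 2‖Xᵏ⁺¹ − Xᵏ‖, where F̄ = F(X̄). -/

import Mathlib

open Filter InnerProductSpace

open scoped RealInnerProductSpace in
/-- The Fréchet subdifferential of `F` at `x`. -/
def frechetSubdiff {E : Type*} [NormedAddCommGroup E] [InnerProductSpace ℝ E]
    (F : E → ℝ) (x : E) : Set E :=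
  {w | ∀ ε > (0 : ℝ), ∀ᶠ y in nhds x, F x + ⟪w, y - x⟫ - ε * ‖y - x‖ ≤ F y}

/-- The limiting subdifferential of `F` at `x`. -/
def limitingSubdiff {E : Type*} [NormedAddCommGroup E] [InnerProductSpace ℝ E]
    (F : E → ℝ) (x : E) : Set E :=
  {w | ∃ xs ws : ℕ → E,
    Tendsto xs atTop (nhds x) ∧ Tendsto (fun k => F (xs k)) atTop (nhds (F x)) ∧
    (∀ k, ws k ∈ frechetSubdiff F (xs k)) ∧ Tendsto ws atTop (nhds w)}

/-- Recursive KL inequality: under the hypotheses of the KL convergence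
theorem, for each `k ≥ 1`,
`‖Xᵏ − Xᵏ⁻¹‖ + (2M/l)(φ(Fᵏ − F̄) − φ(Fᵏ⁺¹ − F̄)) ≥ 2‖Xᵏ⁺¹ − Xᵏ‖`. -/
theorem stmt_10 {n : ℕ} (F : EuclideanSpace ℝ (Fin n) → ℝ)
    (hbdd : ∃ B : ℝ, ∀ x, B ≤ F x)
    (Xbar : EuclideanSpace ℝ (Fin n)) (r η l M : ℝ) (φ : ℝ → ℝ)
    (hr : 0 < r) (hη : 0 < η) (hl : 0 < l) (hM : 0 < M)
    (hφ0 : φ 0 = 0) (hφcont : ContinuousOn φ (Set.Ico 0 η))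
    (hφconc : ConcaveOn ℝ (Set.Ico 0 η) φ)
    (hφdiff : ∀ z ∈ Set.Ioo 0 η, DifferentiableAt ℝ φ z ∧ 0 < deriv φ z)
    (hKL : ∀ x ∈ Metric.closedBall Xbar r, F Xbar < F x → F x < F Xbar + η →
      ∀ w ∈ limitingSubdiff F x, 1 ≤ deriv φ (F x - F Xbar) * ‖w‖)
    (X : ℕ → EuclideanSpace ℝ (Fin n))
    (hdec : ∀ k : ℕ, l / 2 * ‖X (k + 1) - X k‖ ^ 2 ≤ F (X k) - F (X (k + 1)))
    (herr : ∀ k : ℕ, 1 ≤ k →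
      ∃ A ∈ limitingSubdiff F (X k), ‖A‖ ≤ M * ‖X k - X (k - 1)‖)
    (hrange : ∀ k, F Xbar < F (X k) ∧ F (X k) < F Xbar + η)
    (hinit : 2 * Real.sqrt (2 / l * (F (X 0) - F Xbar)) +
        2 * M / l * φ (F (X 0) - F Xbar) + ‖X 0 - Xbar‖ < r) :
    ∀ k : ℕ, 1 ≤ k →
      2 * ‖X (k + 1) - X k‖ ≤
        ‖X k - X (k - 1)‖ +
          2 * M / l * (φ (F (X k) - F Xbar) - φ (F (X (k + 1)) - F Xbar)) := by
  have hmem : ∀ j, F (X j) - F Xbar ∈ Set.Ioo (0:ℝ) η := fun j =>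
    ⟨sub_pos.mpr (hrange j).1, by have := (hrange j).2; linarith⟩
  have hIooIco : Set.Ioo (0:ℝ) η ⊆ Set.Ico 0 η := Set.Ioo_subset_Ico_self
  have hFdec : ∀ j, F (X (j+1)) ≤ F (X j) := fun j => by
    nlinarith [hdec j, sq_nonneg ‖X (j+1) - X j‖]
  have hφmono : MonotoneOn φ (Set.Ico 0 η) :=
    (strictMonoOn_of_deriv_pos (convex_Ico 0 η) hφcont (by
      rw [interior_Ico]; exact fun z hz => (hφdiff z hz).2)).monotoneOn
  have hmem0 : (0:ℝ) ∈ Set.Ico (0:ℝ) η := ⟨le_refl 0, hη⟩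
  have hφnonneg : ∀ z ∈ Set.Ico (0:ℝ) η, 0 ≤ φ z := fun z hz => by
    have := hφmono hmem0 hz hz.1
    rwa [hφ0] at this
  -- tangent line inequality for the concave function φ
  have htan : ∀ x ∈ Set.Ioo (0:ℝ) η, ∀ y ∈ Set.Ioo (0:ℝ) η,
      φ y - φ x ≤ deriv φ x * (y - x) := by
    intro x hx y hy
    have hconv : ConvexOn ℝ (Set.Ico 0 η) (-φ) := hφconc.neg
    have hdiff : DifferentiableAt ℝ (-φ) x := ((hφdiff x hx).1).neg
    have hderiv : deriv (-φ) x = -deriv φ x := by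
      have : (-φ) = fun z => -φ z := rfl
      rw [this, deriv.fun_neg]
    rcases lt_trichotomy x y with h | h | h
    · have := hconv.deriv_le_slope (hIooIco hx) (hIooIco hy) h hdiff
      rw [slope_def_field, hderiv] at this
      have hxy : 0 < y - x := sub_pos.mpr h
      simp only [Pi.neg_apply] at this
      rw [le_div_iff₀ hxy] at this
      nlinarith
    · simp [h]
    · have := hconv.slope_le_deriv (hIooIco hy) (hIooIco hx) h hdiff
      rw [slope_def_field, hderiv] at this
      have hxy : 0 < x - y := sub_pos.mpr h
      simp only [Pi.neg_apply] at this
      rw [div_le_iff₀ hxy] at this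
      nlinarith
  -- the single-step inequality, assuming `X j` lies in the ball
  have step : ∀ j : ℕ, 1 ≤ j → ‖X j - Xbar‖ ≤ r →
      2 * ‖X (j + 1) - X j‖ ≤
        ‖X j - X (j - 1)‖ +
          2 * M / l * (φ (F (X j) - F Xbar) - φ (F (X (j + 1)) - F Xbar)) := by
    intro j hj hball
    obtain ⟨A, hA, hAle⟩ := herr j hj
    have hKLj := hKL (X j) (by simpa [Metric.mem_closedBall, dist_eq_norm] using hball)
      (hrange j).1 (hrange j).2 A hA
    set p := deriv φ (F (X j) - F Xbar) with hp_def
    have hp : 0 < p := (hφdiff _ (hmem j)).2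
    set a := ‖X j - X (j - 1)‖ with ha_def
    set b := ‖X (j + 1) - X j‖ with hb_def
    have h1 : 1 ≤ p * (M * a) := le_trans hKLj (by nlinarith [norm_nonneg A])
    have ha : 0 < a := by nlinarith [mul_pos hp hM]
    have hb : 0 ≤ b := norm_nonneg _
    have htj := htan _ (hmem j) _ (hmem (j+1))
    have hdj := hdec j
    have key : b ^ 2 * l ≤ a * (2 * M * (φ (F (X j) - F Xbar) - φ (F (X (j+1)) - F Xbar))) := by
      nlinarith [mul_le_mul_of_nonneg_left hdj hp.le, mul_le_mul_of_nonneg_right h1 (mul_nonneg (sq_nonneg b) hl.le), mul_pos hp hM, sq_nonneg b]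
    have hgoal : 2 * b ≤ a + 2 * M / l * (φ (F (X j) - F Xbar) - φ (F (X (j+1)) - F Xbar)) := by
      rw [div_mul_eq_mul_div, ← sub_nonneg]
      have : a + 2 * M * (φ (F (X j) - F Xbar) - φ (F (X (j+1)) - F Xbar)) / l - 2 * b
          = (a * (2 * M * (φ (F (X j) - F Xbar) - φ (F (X (j+1)) - F Xbar))) - b^2 * l
              + l * (a - b)^2) / (a * l) := by
        field_simp
        ring
      rw [this]
      apply div_nonneg
      · nlinarith [key, sq_nonneg (a - b)]
      · positivity
    simpa using hgoal
  -- triangle inequality bound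
  have htri : ∀ j : ℕ, ‖X j - Xbar‖ ≤ ‖X 0 - Xbar‖ + ∑ i ∈ Finset.range j, ‖X (i+1) - X i‖ := by
    intro j
    induction j with
    | zero => simp
    | succ m ih =>
      have h1 : ‖X (m+1) - Xbar‖ ≤ ‖X (m+1) - X m‖ + ‖X m - Xbar‖ := by
        calc ‖X (m+1) - Xbar‖ = ‖(X (m+1) - X m) + (X m - Xbar)‖ := by rw [sub_add_sub_cancel]
        _ ≤ ‖X (m+1) - X m‖ + ‖X m - Xbar‖ := norm_add_le _ _
      rw [Finset.sum_range_succ]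
      linarith
  have hc : 0 < 2 * M / l := by positivity
  have hd0 : ‖X 1 - X 0‖ ≤ Real.sqrt (2 / l * (F (X 0) - F Xbar)) := by
    apply Real.le_sqrt_of_sq_le
    have h0 := hdec 0
    have h1 : F Xbar < F (X 1) := (hrange 1).1
    rw [div_mul_eq_mul_div, le_div_iff₀ hl]
    nlinarith
  have hφ1le : φ (F (X 1) - F Xbar) ≤ φ (F (X 0) - F Xbar) :=
    hφmono (hIooIco (hmem 1)) (hIooIco (hmem 0)) (by linarith [hFdec 0])
  have hφ1c : 2*M/l * φ (F (X 1) - F Xbar) ≤ 2*M/l * φ (F (X 0) - F Xbar) :=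
    mul_le_mul_of_nonneg_left hφ1le hc.le
  have hφ0nn : 0 ≤ 2*M/l * φ (F (X 0) - F Xbar) :=
    mul_nonneg hc.le (hφnonneg _ (hIooIco (hmem 0)))
  have hsqrtnn := Real.sqrt_nonneg (2 / l * (F (X 0) - F Xbar))
  have hmain : ∀ j : ℕ, ‖X j - Xbar‖ ≤ r ∧ (1 ≤ j →
      (∑ i ∈ Finset.range j, ‖X (i+1) - X i‖) + ‖X j - X (j-1)‖
          + 2*M/l * φ (F (X j) - F Xbar)
        ≤ 2 * ‖X 1 - X 0‖ + 2*M/l * φ (F (X 1) - F Xbar)) := by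
    intro j
    induction j using Nat.strong_induction_on with
    | _ j ih =>
      match j with
      | 0 =>
        refine ⟨?_, by omega⟩
        linarith [htri 0, Finset.sum_range_zero (fun i => ‖X (i+1) - X i‖)]
      | 1 =>
        have hs1 : (∑ i ∈ Finset.range 1, ‖X (i+1) - X i‖) = ‖X 1 - X 0‖ := by
          simp
        constructor
        · have h := htri 1
          rw [hs1] at h
          linarith
        · intro _
          rw [hs1]
          norm_num
          linarith
      | (m+2) =>
        have hball : ‖X (m+1) - Xbar‖ ≤ r := (ih (m+1) (by omega)).1
        have hTm1 : (∑ i ∈ Finset.range (m+1), ‖X (i+1) - X i‖) + ‖X (m+1) - X m‖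
            + 2*M/l * φ (F (X (m+1)) - F Xbar)
            ≤ 2 * ‖X 1 - X 0‖ + 2*M/l * φ (F (X 1) - F Xbar) :=
          (ih (m+1) (by omega)).2 (by omega)
        have hstep : 2 * ‖X (m+2) - X (m+1)‖ ≤ ‖X (m+1) - X m‖
            + 2*M/l * (φ (F (X (m+1)) - F Xbar) - φ (F (X (m+2)) - F Xbar)) :=
          step (m+1) (by omega) hball
        have hsum2 : (∑ i ∈ Finset.range (m+2), ‖X (i+1) - X i‖)
            = (∑ i ∈ Finset.range (m+1), ‖X (i+1) - X i‖) + ‖X (m+2) - X (m+1)‖ :=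
          Finset.sum_range_succ _ _
        have hT : (∑ i ∈ Finset.range (m+2), ‖X (i+1) - X i‖) + ‖X (m+2) - X (m+1)‖
            + 2*M/l * φ (F (X (m+2)) - F Xbar)
            ≤ 2 * ‖X 1 - X 0‖ + 2*M/l * φ (F (X 1) - F Xbar) := by
          rw [hsum2]
          linarith
        refine ⟨?_, fun _ => hT⟩
        have h := htri (m+2)
        have hφnn : 0 ≤ 2*M/l * φ (F (X (m+2)) - F Xbar) :=
          mul_nonneg hc.le (hφnonneg _ (hIooIco (hmem (m+2))))
        have hdnn : (0:ℝ) ≤ ‖X (m+2) - X (m+1)‖ := norm_nonneg _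
        linarith
  intro k hk
  exact step k hk (hmain k).1
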